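/- Let (G,X) be a G-system and F = (F_n)_{n∈D} a Følner net in G. If there exists x ∈ X with C_F(x) = X, then (G,X) is topologically ergodic: for any nonempty open sets U, V ⊆ X, the set N(U,V) = {g ∈ G : U ∩ g⁻¹V ≠ ∅} is syndetic in G. -/

import Mathlib

open Filter Metric Set

section Defs

variable {G : Type*} [Group G] [DecidableEq G]
variable {D : Type*} [Preorder D]

/-- `F` is a (left) Følner net in `G`. -/
def IsFolnerNet (F : D → Finset G) : Prop :=
  (∀ n, (F n).Nonempty) ∧
    ∀ g : G,
      Tendsto (fun n : D =>
          ((symmDiff ((F n).image fun h => g * h) (F n)).card : ℝ) / (F n).card)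
        atTop (nhds 0)

/-- Upper density of `A ⊆ G` relative to the net `F`. -/
noncomputable def upperDensity (F : D → Finset G) (A : Set G) : ℝ :=
  sSup {α : ℝ | ∀ m : D, ∃ n : D, m ≤ n ∧
    α ≤ (((F n : Set G) ∩ A).ncard : ℝ) / (F n).card}

variable {X : Type*} [MetricSpace X] [MulAction G X]

/-- The minimal `F`-center of attraction of `x`. -/
def minCenter (F : D → Finset G) (x : X) : Set X :=
  {y : X | ∀ U : Set X, IsOpen U → y ∈ U → 0 < upperDensity F {g : G | g • x ∈ U}}

end Defs

/-- `S ⊆ G` is syndetic: there is a finite `F ⊆ G` with `⋃_{f ∈ F} f⁻¹ S = G`. -/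
def IsSyndeticSet {G : Type*} [Group G] (S : Set G) : Prop :=
  ∃ F : Finset G, ∀ g : G, ∃ f ∈ F, f * g ∈ S

/-- `z` is an almost periodic point: `N(z, U)` is syndetic for every open neighborhood `U`. -/
def IsAlmostPeriodicPt (G : Type*) [Group G] {X : Type*} [MetricSpace X] [MulAction G X]
    (z : X) : Prop :=
  ∀ U : Set X, IsOpen U → z ∈ U → IsSyndeticSet {g : G | g • z ∈ U}

/-- If `A` has positive upper density then `A` is nonempty. -/
theorem upperDensity_pos_nonempty {G : Type*} [Group G] [DecidableEq G]
    {D : Type*} [Preorder D] [Nonempty D]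
    (F : D → Finset G) (A : Set G) (h : 0 < upperDensity F A) : A.Nonempty := by
  rcases Set.eq_empty_or_nonempty A with rfl | hA
  · exfalso
    have hle : upperDensity F (∅ : Set G) ≤ 0 := by
      refine Real.sSup_le ?_ le_rfl
      intro α hα
      obtain ⟨n, -, hn⟩ := hα (Classical.arbitrary D)
      simpa using hn
    linarith
  · exact hA

/-- Lemma 3.6: if `C_F(x) = X` for some `x`, then `(G, X)` is topologically ergodic:
`N(U, V)` is syndetic for any nonempty open `U, V ⊆ X`. -/
theorem topologicallyErgodic_of_minCenter_univ
    {G : Type*} [Group G] [Infinite G] [DecidableEq G]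
    {D : Type*} [Preorder D] [IsDirected D (· ≤ ·)] [Nonempty D]
    {X : Type*} [MetricSpace X] [CompactSpace X] [MulAction G X]
    (hcont : ∀ g : G, Continuous fun y : X => g • y)
    (Fol : D → Finset G) (hFol : IsFolnerNet Fol)
    (hX : ∃ x : X, minCenter Fol x = Set.univ) :
    ∀ U V : Set X, IsOpen U → IsOpen V → U.Nonempty → V.Nonempty →
      IsSyndeticSet {g : G | ∃ u ∈ U, g • u ∈ V} := by
  classical
  obtain ⟨x, hx⟩ := hX
  intro U V hU hV hUne hVne
  have hmem : ∀ (y : X) (W : Set X), IsOpen W → y ∈ W →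
      0 < upperDensity Fol {g : G | g • x ∈ W} := fun y W hW hyW =>
    (hx ▸ Set.mem_univ y : y ∈ minCenter Fol x) W hW hyW
  obtain ⟨u₁, hu₁⟩ := hUne
  obtain ⟨v₁, hv₁⟩ := hVne
  obtain ⟨g₁, hg₁⟩ := upperDensity_pos_nonempty Fol _ (hmem u₁ U hU hu₁)
  obtain ⟨g₂, hg₂⟩ := upperDensity_pos_nonempty Fol _ (hmem v₁ V hV hv₁)
  simp only [Set.mem_setOf_eq] at hg₁ hg₂
  set h₀ : G := g₂ * g₁⁻¹ with hh₀
  set W' : Set X := U ∩ (fun y => h₀ • y) ⁻¹' V with hW'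
  have hW'open : IsOpen W' := hU.inter (hV.preimage (hcont h₀))
  have hu₀ : g₁ • x ∈ W' := by
    refine ⟨hg₁, ?_⟩
    show h₀ • g₁ • x ∈ V
    rw [smul_smul, hh₀, inv_mul_cancel_right]
    exact hg₂
  set B : Set G := {g : G | g • x ∈ W'} with hB
  have hBpos : 0 < upperDensity Fol B := hmem (g₁ • x) W' hW'open hu₀
  have hBne : B.Nonempty := upperDensity_pos_nonempty Fol B hBpos
  -- extract a positive density value α
  have hBpos' : 0 < sSup {α : ℝ | ∀ m : D, ∃ n : D, m ≤ n ∧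
      α ≤ (((Fol n : Set G) ∩ B).ncard : ℝ) / (Fol n).card} := hBpos
  have hSαne : {α : ℝ | ∀ m : D, ∃ n : D, m ≤ n ∧
      α ≤ (((Fol n : Set G) ∩ B).ncard : ℝ) / (Fol n).card}.Nonempty := by
    by_contra hne
    rw [Set.not_nonempty_iff_eq_empty] at hne
    rw [hne, Real.sSup_empty] at hBpos'
    exact lt_irrefl 0 hBpos'
  obtain ⟨α, hαS, hα⟩ := exists_lt_of_lt_csSup hSαne hBpos'
  simp only [Set.mem_setOf_eq] at hαS
  -- the "time-translate" sets
  have hPne : ∀ a : G, {h : G | (a * h) • x ∈ W'}.Nonempty := by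
    intro a
    obtain ⟨b, hb⟩ := hBne
    exact ⟨a⁻¹ * b, by show (a * (a⁻¹ * b)) • x ∈ W'; rw [mul_inv_cancel_left]; exact hb⟩
  -- counting bound: any pairwise-disjoint family of translates has size ≤ 2/α
  have hbound : ∀ T : Finset G,
      (T : Set G).Pairwise (fun a b =>
        Disjoint {h : G | (a * h) • x ∈ W'} {h : G | (b * h) • x ∈ W'}) →
      (T.card : ℝ) ≤ 2 / α := by
    intro T hT
    have hev : ∀ᶠ n in (atTop : Filter D), ∀ a ∈ T,
        ((symmDiff ((Fol n).image fun h => a * h) (Fol n)).card : ℝ) / (Fol n).card < α / 2 := by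
      rw [Filter.eventually_all_finset]
      intro a _
      exact (hFol.2 a).eventually_lt_const (by linarith)
    obtain ⟨m, hm⟩ := Filter.eventually_atTop.mp hev
    obtain ⟨n, hmn, hd⟩ := hαS m
    have hcardpos : (0 : ℝ) < (Fol n).card := by
      exact_mod_cast Finset.card_pos.mpr (hFol.1 n)
    set Q : G → Finset G := fun a => (Fol n).filter (fun h => (a * h) • x ∈ W') with hQ
    have hQsub : ∀ a, Q a ⊆ Fol n := fun a => Finset.filter_subset _ _
    have hQcard : ∀ a ∈ T, α / 2 * (Fol n).card ≤ ((Q a).card : ℝ) := by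
      intro a haT
      set img : Finset G := (Fol n).image (fun h => a * h) with himg
      have h1 : img.filter (fun h => h • x ∈ W') = (Q a).image (fun h => a * h) := by
        ext h'
        simp only [himg, hQ, Finset.mem_filter, Finset.mem_image]
        constructor
        · rintro ⟨⟨h, hh, rfl⟩, h2⟩
          exact ⟨h, ⟨hh, h2⟩, rfl⟩
        · rintro ⟨h, ⟨hh, h2⟩, rfl⟩
          exact ⟨⟨h, hh, rfl⟩, h2⟩
      have h2 : (img.filter (fun h => h • x ∈ W')).card = (Q a).card := by
        rw [h1, Finset.card_image_of_injective _ (mul_right_injective a)]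
      have h3 : (Fol n).filter (fun h => h • x ∈ W') ⊆
          img.filter (fun h => h • x ∈ W') ∪ (Fol n \ img) := by
        intro h hh
        rw [Finset.mem_filter] at hh
        by_cases hi : h ∈ img
        · exact Finset.mem_union_left _ (Finset.mem_filter.mpr ⟨hi, hh.2⟩)
        · exact Finset.mem_union_right _ (Finset.mem_sdiff.mpr ⟨hh.1, hi⟩)
      have h4 : Fol n \ img ⊆ symmDiff img (Fol n) := by
        intro h hh
        rw [Finset.mem_sdiff] at hh
        rw [Finset.mem_symmDiff]
        exact Or.inr ⟨hh.1, hh.2⟩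
      have h5 : ((Fol n).filter (fun h => h • x ∈ W')).card ≤
          (Q a).card + (symmDiff img (Fol n)).card := by
        calc ((Fol n).filter (fun h => h • x ∈ W')).card
            ≤ (img.filter (fun h => h • x ∈ W') ∪ (Fol n \ img)).card :=
              Finset.card_le_card h3
          _ ≤ (img.filter (fun h => h • x ∈ W')).card + (Fol n \ img).card :=
              Finset.card_union_le _ _
          _ ≤ (Q a).card + (symmDiff img (Fol n)).card := by
              rw [h2]
              exact Nat.add_le_add_left (Finset.card_le_card h4) _
      have h6 : (((Fol n : Set G) ∩ B).ncard : ℝ)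
          = (((Fol n).filter (fun h => h • x ∈ W')).card : ℝ) := by
        norm_cast
        rw [← Set.ncard_coe_finset ((Fol n).filter (fun h => h • x ∈ W'))]
        congr 1
        ext h
        simp [hB]
      have h7 : α * (Fol n).card ≤ (((Fol n).filter (fun h => h • x ∈ W')).card : ℝ) := by
        have := (le_div_iff₀ hcardpos).mp hd
        rw [h6] at this
        exact this
      have h8 : ((symmDiff img (Fol n)).card : ℝ) < α / 2 * (Fol n).card := by
        have := hm n hmn a haT
        rw [div_lt_iff₀ hcardpos] at this
        exact this
      have h5' : (((Fol n).filter (fun h => h • x ∈ W')).card : ℝ)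
          ≤ ((Q a).card : ℝ) + ((symmDiff img (Fol n)).card : ℝ) := by
        exact_mod_cast h5
      linarith
    have hdisj : ∀ a ∈ T, ∀ b ∈ T, a ≠ b → Disjoint (Q a) (Q b) := by
      intro a ha b hb hab
      have hpq := hT (Finset.mem_coe.mpr ha) (Finset.mem_coe.mpr hb) hab
      rw [Finset.disjoint_left]
      intro h hha hhb
      exact Set.disjoint_left.mp hpq ((Finset.mem_filter.mp hha).2)
        ((Finset.mem_filter.mp hhb).2)
    have hb1 : (T.biUnion Q).card = ∑ a ∈ T, (Q a).card := Finset.card_biUnion hdisj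
    have hb2 : (T.biUnion Q).card ≤ (Fol n).card :=
      Finset.card_le_card (Finset.biUnion_subset.mpr (fun a _ => hQsub a))
    have h9 : T.card • (α / 2 * (Fol n).card) ≤ ∑ a ∈ T, ((Q a).card : ℝ) :=
      Finset.card_nsmul_le_sum T _ _ hQcard
    rw [nsmul_eq_mul] at h9
    have h10 : (∑ a ∈ T, ((Q a).card : ℝ)) ≤ ((Fol n).card : ℝ) := by
      have : (∑ a ∈ T, (Q a).card) ≤ (Fol n).card := by rw [← hb1]; exact hb2
      exact_mod_cast this
    rw [le_div_iff₀ hα]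
    nlinarith [hcardpos]
  -- a maximal disjoint family
  set S : Set ℕ := {m : ℕ | ∃ T : Finset G,
      (T : Set G).Pairwise (fun a b =>
        Disjoint {h : G | (a * h) • x ∈ W'} {h : G | (b * h) • x ∈ W'}) ∧ T.card = m} with hS
  have hSne : S.Nonempty := ⟨1, ({1} : Finset G), by simp, Finset.card_singleton 1⟩
  have hSbdd : BddAbove S := by
    refine ⟨Nat.ceil (2 / α), ?_⟩
    rintro m ⟨T, hTv, rfl⟩
    have := (hbound T hTv).trans (Nat.le_ceil _)
    exact_mod_cast this
  obtain ⟨T, hTv, hTcard⟩ := Nat.sSup_mem hSne hSbdd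
  have hmax : ∀ γ : G, ∃ i ∈ T,
      ¬ Disjoint {h : G | (γ⁻¹ * h) • x ∈ W'} {h : G | (i * h) • x ∈ W'} := by
    intro γ
    by_cases hγT : γ⁻¹ ∈ T
    · refine ⟨γ⁻¹, hγT, fun hdis => ?_⟩
      rw [Set.disjoint_iff_inter_eq_empty, Set.inter_self] at hdis
      exact (hPne γ⁻¹).ne_empty hdis
    · by_contra hcon
      push_neg at hcon
      have hval : ((insert γ⁻¹ T : Finset G) : Set G).Pairwise (fun a b =>
          Disjoint {h : G | (a * h) • x ∈ W'} {h : G | (b * h) • x ∈ W'}) := by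
        rw [Finset.coe_insert]
        letI : Std.Symm (fun a b : G => Disjoint {h : G | (a * h) • x ∈ W'} {h : G | (b * h) • x ∈ W'}) :=
          ⟨fun a b hab => hab.symm⟩
        refine hTv.insert_of_symm ?_
        intro b hb _
        exact hcon b (Finset.mem_coe.mp hb)
      have hmemS : sSup S + 1 ∈ S :=
        ⟨insert γ⁻¹ T, hval, by rw [Finset.card_insert_of_notMem hγT, hTcard]⟩
      have := le_csSup hSbdd hmemS
      omega
  -- conclusion
  refine ⟨T.image (fun i => h₀ * i), ?_⟩
  intro γ
  obtain ⟨i, hiT, hnd⟩ := hmax γ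
  obtain ⟨z, hz1, hz2⟩ := Set.not_disjoint_iff.mp hnd
  simp only [Set.mem_setOf_eq, hW', Set.mem_inter_iff, Set.mem_preimage] at hz1 hz2
  refine ⟨h₀ * i, Finset.mem_image_of_mem _ hiT, ?_⟩
  show ∃ u ∈ U, ((h₀ * i) * γ) • u ∈ V
  refine ⟨(γ⁻¹ * z) • x, hz1.1, ?_⟩
  have hcalc : ((h₀ * i) * γ) • ((γ⁻¹ * z) • x) = h₀ • ((i * z) • x) := by
    rw [smul_smul, smul_smul]
    congr 1
    group
  rw [hcalc]
  exact hz2.2
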